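/- If Γ is a shellable simplicial complex of dimension d, then the i-th facet skeleton Γ^[i] is shellable for every i ≤ d. In particular, if Γ is pure, every skeleton of Γ is shellable. -/

import Mathlib

attribute [local instance] Classical.propDecidable

abbrev Mon (n : ℕ) := Fin n →₀ ℕ

def mdeg {n : ℕ} (u : Mon n) : ℕ := u.sum fun _ e => e

/-- `mcolon u v` is the exponent vector of `u : v = u / gcd(u,v)`. -/
noncomputable def mcolon {n : ℕ} (u v : Mon n) : Mon n := u - v

def IsAdmissible {n : ℕ} (L : List (Mon n)) : Prop :=
  ∀ i (hi : i < L.length), ∀ j (hj : j < i), ∃ k, ∃ hk : k < i,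
    mdeg (mcolon (L[k]'(hk.trans hi)) (L[i]'hi)) = 1 ∧
    mcolon (L[k]'(hk.trans hi)) (L[i]'hi) ≤
      mcolon (L[j]'(hj.trans hi)) (L[i]'hi)

def LinearQuotientsSet {n : ℕ} (T : Set (Mon n)) : Prop :=
  ∃ L : List (Mon n), L.Nodup ∧ IsAdmissible L ∧ {u | u ∈ L} = T

def LinearQuotients {n : ℕ} (G : Finset (Mon n)) : Prop :=
  LinearQuotientsSet (↑G : Set (Mon n))

/-- A (non-pure) shelling in the sense of Björner–Wachs: for each `k ≥ 2` the
intersection of `⟨F_k⟩` with `⟨F_1,…,F_{k-1}⟩` is nonempty and pure of dimension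
`dim F_k - 1`. -/
def IsShelling {n : ℕ} (L : List (Finset (Fin n))) : Prop :=
  ∀ k (hk : k < L.length), 0 < k →
    (∃ G : Finset (Fin n), G ⊆ L[k]'hk ∧ G.card + 1 = (L[k]'hk).card ∧
      ∃ l, ∃ hl : l < k, G ⊆ L[l]'(hl.trans hk)) ∧
    (∀ G : Finset (Fin n), G ⊆ L[k]'hk →
      (∃ l, ∃ hl : l < k, G ⊆ L[l]'(hl.trans hk)) →
      ∃ H : Finset (Fin n), G ⊆ H ∧ H ⊆ L[k]'hk ∧ H.card + 1 = (L[k]'hk).card ∧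
        ∃ l, ∃ hl : l < k, H ⊆ L[l]'(hl.trans hk))

/-- The restriction set `R_δ(F) = {i ∈ F : F \ {i} ∈ ⟨F_1,…,F_{k-1}⟩}`, where `F` is the
`k`-th facet in the order `δ` given by the list `L`. -/
noncomputable def Rset {n : ℕ} (L : List (Finset (Fin n))) (F : Finset (Fin n)) :
    Finset (Fin n) :=
  F.filter fun i => ∃ l, ∃ hl : l < L.idxOf F,
    F.erase i ⊆ L[l]'(hl.trans_le L.idxOf_le_length)

/-- A simplicial complex, given by the finite antichain of its facets, is shellable if
its facets admit a shelling order. -/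
def Shellable {n : ℕ} (Δ : Finset (Finset (Fin n))) : Prop :=
  ∃ L : List (Finset (Fin n)), L.Nodup ∧ L.toFinset = Δ ∧ IsShelling L

/-- The `1`-facet skeleton of the simplicial complex with facet set `Δ`: its facets
are the maximal sets among all `G ⊆ F`, `F` a facet, with `|G| = |F| - 1`. -/
noncomputable def facetSkeleton {n : ℕ} (Δ : Finset (Finset (Fin n))) :
    Finset (Finset (Fin n)) :=
  letI T := Δ.biUnion fun F => F.powerset.filter fun G => G.card + 1 = F.card
  T.filter fun G => ∀ H ∈ T, G ⊆ H → G = H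

def SAux {n : ℕ} (L : List (Finset (Fin n))) : Prop :=
  ∀ (A : List (Finset (Fin n))) (F : Finset (Fin n)) (B : List (Finset (Fin n))), L = A ++ F :: B → ∀ E ∈ A, ∃ J ∈ A, (J ∩ F).card + 1 = F.card ∧ E ∩ F ⊆ J

lemma take_decomp {n : ℕ} (L : List (Finset (Fin n))) (k : ℕ) (hk : k < L.length) :
    L = L.take k ++ (L[k]'hk) :: L.drop (k+1) := by
  conv_lhs => rw [← List.take_append_drop k L]
  rw [List.drop_eq_getElem_cons hk]

lemma mem_take_iff {n : ℕ} (L : List (Finset (Fin n))) (k : ℕ) (hk : k < L.length) (J : Finset (Fin n)) :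
    J ∈ L.take k ↔ ∃ l, ∃ hl : l < k, L[l]'(hl.trans hk) = J := by
  rw [List.mem_iff_getElem]
  constructor
  · rintro ⟨i, hi, rfl⟩
    have hik : i < k := by simp [List.length_take] at hi; omega
    exact ⟨i, hik, by simp [List.getElem_take]⟩
  · rintro ⟨l, hl, rfl⟩
    refine ⟨l, ?_, ?_⟩ <;> simp [List.length_take, hl, hl.trans hk, List.getElem_take]

lemma SAux.isShelling {n : ℕ} {L : List (Finset (Fin n))} (h : SAux L) : IsShelling L := by
  intro k hk hk0
  have hdec := take_decomp L k hk
  constructor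
  · have h0 : (L[0]'(hk0.trans hk)) ∈ L.take k := (mem_take_iff L k hk _).2 ⟨0, hk0, rfl⟩
    obtain ⟨J, hJ, hcard, -⟩ := h _ _ _ hdec _ h0
    obtain ⟨l, hl, rfl⟩ := (mem_take_iff L k hk J).1 hJ
    exact ⟨_ ∩ _, Finset.inter_subset_right, hcard, l, hl, Finset.inter_subset_left⟩
  · rintro G hG ⟨l, hl, hGl⟩
    have hm : (L[l]'(hl.trans hk)) ∈ L.take k := (mem_take_iff L k hk _).2 ⟨l, hl, rfl⟩
    obtain ⟨J, hJ, hcard, hsub⟩ := h _ _ _ hdec _ hm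
    obtain ⟨l', hl', rfl⟩ := (mem_take_iff L k hk J).1 hJ
    exact ⟨_ ∩ _, Finset.subset_inter hGl hG |>.trans hsub |> fun _ => Finset.subset_inter ((Finset.subset_inter hGl hG).trans hsub) hG, Finset.inter_subset_right, hcard, l', hl', Finset.inter_subset_left⟩

lemma isShelling_SAux {n : ℕ} {L : List (Finset (Fin n))} (hs : IsShelling L)
    (hnd : L.Nodup) (hpair : ∀ a ∈ L, ∀ b ∈ L, a ⊆ b → a = b) : SAux L := by
  intro A F B hdec E hE
  subst hdec
  set k := A.length with hkdef
  have hk : k < (A ++ F :: B).length := by simp [hkdef]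
  have hFk : (A ++ F :: B)[k]'hk = F := by
    rw [List.getElem_append_right le_rfl]; simp
  have hFmem : F ∈ A ++ F :: B := by simp
  obtain ⟨l, hl, hEl⟩ := List.mem_iff_getElem.1 hE
  have hlk : ∀ l (hl : l < k), (A ++ F :: B)[l]'(hl.trans hk) = A[l]'hl := fun l hl =>
    List.getElem_append_left hl
  have hk0 : 0 < k := by omega
  obtain ⟨-, h2⟩ := hs k hk hk0
  obtain ⟨H, hGH, hHF, hcard, l', hl', hHl'⟩ := h2 (E ∩ F) (by rw [hFk]; exact Finset.inter_subset_right)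
    ⟨l, hl, by rw [hlk l hl, hEl]; exact Finset.inter_subset_left⟩
  rw [hFk] at hHF hcard
  set J := (A ++ F :: B)[l']'(hl'.trans hk) with hJdef
  have hJA : J ∈ A := by rw [hJdef, hlk l' hl']; exact List.getElem_mem _
  have hJL : J ∈ A ++ F :: B := by simp [hJA]
  refine ⟨J, hJA, ?_, hGH.trans hHl'⟩
  have hsub : H ⊆ J ∩ F := Finset.subset_inter hHl' hHF
  have hne : J ≠ F := by
    intro hJF
    have : l' = k := hnd.getElem_inj_iff.1 (by rw [← hJdef, hJF, hFk])
    omega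
  have hlt : (J ∩ F).card < F.card := by
    rcases (Finset.card_le_card (Finset.inter_subset_right (s₁ := J))).lt_or_eq with h | h
    · exact h
    · exfalso
      have heq : J ∩ F = F := Finset.eq_of_subset_of_card_le Finset.inter_subset_right h.ge
      have hFJ : F ⊆ J := by rw [← heq]; exact Finset.inter_subset_left
      exact hne (hpair F hFmem J hJL hFJ).symm
  have hge : H.card ≤ (J ∩ F).card := Finset.card_le_card hsub
  omega

lemma SAux.swap {n : ℕ} {X Y : List (Finset (Fin n))} {F G : Finset (Fin n)}
    (h : SAux (X ++ F :: G :: Y)) (hFG : F.card < G.card)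
    (hpair : ∀ a ∈ X ++ F :: G :: Y, ∀ b ∈ X ++ F :: G :: Y, a ⊆ b → a = b) :
    SAux (X ++ G :: F :: Y) := by
  have hd1 : X ++ F :: G :: Y = (X ++ [F]) ++ G :: Y := by simp
  have hnotF : ∀ E ∈ X ++ [F], ∃ J ∈ X, (J ∩ G).card + 1 = G.card ∧ E ∩ G ⊆ J := by
    intro E hEX
    obtain ⟨J, hJ, hc, hs⟩ := h (X ++ [F]) G Y hd1 E hEX
    rcases List.mem_append.1 hJ with hJ | hJ
    · exact ⟨J, hJ, hc, hs⟩
    · exfalso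
      simp only [List.mem_singleton] at hJ
      subst hJ
      have h1 : (J ∩ G).card ≤ J.card := Finset.card_le_card Finset.inter_subset_left
      have h2 : J ∩ G = J := Finset.eq_of_subset_of_card_le Finset.inter_subset_left (by omega)
      have h3 : J ⊆ G := by rw [← h2]; exact Finset.inter_subset_right
      have hJG := hpair J (by simp) G (by simp) h3
      rw [hJG] at hFG
      omega
  have caseXG : ∀ E ∈ X, ∃ J ∈ X, (J ∩ G).card + 1 = G.card ∧ E ∩ G ⊆ J := by
    intro E hEX; exact hnotF E (by simp [hEX])
  have caseF : ∀ E ∈ X ++ [G], ∃ J ∈ X ++ [G], (J ∩ F).card + 1 = F.card ∧ E ∩ F ⊆ J := by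
    intro E hE
    rcases List.mem_append.1 hE with hEX | hEG
    · obtain ⟨J, hJ, hc, hs⟩ := h X F (G :: Y) rfl E hEX
      exact ⟨J, by simp [hJ], hc, hs⟩
    · simp only [List.mem_singleton] at hEG
      subst hEG
      obtain ⟨J₀, hJ₀, hc₀, hs₀⟩ := hnotF F (by simp)
      obtain ⟨J₁, hJ₁, hc₁, hs₁⟩ := h X F (E :: Y) rfl J₀ hJ₀
      refine ⟨J₁, by simp [hJ₁], hc₁, ?_⟩
      have hEF : E ∩ F ⊆ J₀ ∩ F :=
        Finset.subset_inter (by rw [Finset.inter_comm]; exact hs₀) Finset.inter_subset_right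
      exact hEF.trans hs₁
  intro A K B hdec E hE
  rcases List.append_eq_append_iff.1 hdec with ⟨a', ha1, ha2⟩ | ⟨c', hc1, hc2⟩
  · cases a' with
    | nil =>
      simp only [List.nil_append] at ha2
      injection ha2 with h1 h2
      subst h1; subst h2
      simp only [List.append_nil] at ha1; subst ha1
      exact caseXG E hE
    | cons g a2 =>
      simp only [List.cons_append] at ha2
      injection ha2 with h1 h2
      subst h1
      cases a2 with
      | nil =>
        simp only [List.nil_append] at h2
        injection h2 with h3 h4
        subst h3; subst h4; subst ha1
        exact caseF E hE
      | cons f a3 =>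
        simp only [List.cons_append] at h2
        injection h2 with h3 h4
        subst h3; subst ha1
        have hdec2 : X ++ F :: G :: Y = (X ++ F :: G :: a3) ++ K :: B := by
          rw [h4]; simp
        have hE' : E ∈ X ++ F :: G :: a3 := by
          rcases List.mem_append.1 hE with h5 | h5
          · simp [h5]
          · simp only [List.mem_cons] at h5
            rcases h5 with rfl | rfl | h5
            · simp
            · simp
            · simp [h5]
        obtain ⟨J, hJ, hc, hs⟩ := h _ K B hdec2 E hE'
        have hJ' : J ∈ X ++ G :: F :: a3 := by
          rcases List.mem_append.1 hJ with h5 | h5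
          · simp [h5]
          · simp only [List.mem_cons] at h5
            rcases h5 with rfl | rfl | h5
            · simp
            · simp
            · simp [h5]
        exact ⟨J, hJ', hc, hs⟩
  · cases c' with
    | nil =>
      simp only [List.nil_append] at hc2
      injection hc2 with h1 h2
      subst h1; subst h2
      simp only [List.append_nil] at hc1; subst hc1
      exact caseXG E hE
    | cons k c2 =>
      simp only [List.cons_append] at hc2
      injection hc2 with h1 h2
      subst h1; subst h2; subst hc1
      have hdec2 : (A ++ K :: c2) ++ F :: G :: Y = A ++ K :: (c2 ++ F :: G :: Y) := by simp
      obtain ⟨J, hJ, hc, hs⟩ := h A K (c2 ++ F :: G :: Y) hdec2 E hE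
      exact ⟨J, hJ, hc, hs⟩

def mu {n : ℕ} : List (Finset (Fin n)) → ℕ
  | [] => 0
  | a :: l => l.countP (fun b => a.card < b.card) + mu l

lemma mu_append {n : ℕ} (A B : List (Finset (Fin n))) :
    mu (A ++ B) = mu A + (A.map fun a => B.countP fun b => a.card < b.card).sum + mu B := by
  induction A with
  | nil => simp [mu]
  | cons a A ih =>
    simp only [List.cons_append, mu, List.append_eq, List.countP_append, ih, List.map_cons,
      List.sum_cons]
    omega

lemma mu_swap {n : ℕ} (X Y : List (Finset (Fin n))) (F G : Finset (Fin n))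
    (h : F.card < G.card) : mu (X ++ G :: F :: Y) + 1 = mu (X ++ F :: G :: Y) := by
  rw [mu_append, mu_append]
  have hcross : ∀ a : Finset (Fin n), (G :: F :: Y).countP (fun b => a.card < b.card)
      = (F :: G :: Y).countP (fun b => a.card < b.card) := by
    intro a; simp only [List.countP_cons]; ring
  simp only [hcross]
  have h1 : mu (G :: F :: Y) + 1 = mu (F :: G :: Y) := by
    simp only [mu, List.countP_cons, decide_eq_true_eq]
    rw [if_pos h, if_neg (by omega : ¬ G.card < F.card)]
    omega
  omega

lemma not_sorted_exists {n : ℕ} {L : List (Finset (Fin n))}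
    (h : ¬ L.Pairwise (fun a b => b.card ≤ a.card)) :
    ∃ X F G Y, L = X ++ F :: G :: Y ∧ F.card < G.card := by
  induction L with
  | nil => exact absurd List.Pairwise.nil h
  | cons a l ih =>
    rw [List.pairwise_cons] at h
    by_cases h2 : l.Pairwise (fun a b => b.card ≤ a.card)
    · have h1 : ¬ ∀ b ∈ l, b.card ≤ a.card := fun hh => h ⟨hh, h2⟩
      push_neg at h1
      obtain ⟨b, hb, hab⟩ := h1
      cases l with
      | nil => simp at hb
      | cons c l' =>
        refine ⟨[], a, c, l', rfl, ?_⟩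
        rcases List.mem_cons.1 hb with rfl | hb'
        · omega
        · have := (List.pairwise_cons.1 h2).1 b hb'
          omega
    · obtain ⟨X, F, G, Y, hdec, hlt⟩ := ih h2
      exact ⟨a :: X, F, G, Y, by rw [hdec]; rfl, hlt⟩

lemma sort_exists {n : ℕ} : ∀ (N : ℕ) (L : List (Finset (Fin n))), mu L ≤ N →
    SAux L → (∀ a ∈ L, ∀ b ∈ L, a ⊆ b → a = b) →
    ∃ M, L.Perm M ∧ M.Pairwise (fun a b => b.card ≤ a.card) ∧ SAux M := by
  intro N
  induction N with
  | zero =>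
    intro L hmu hs hpair
    by_cases hsort : L.Pairwise (fun a b => b.card ≤ a.card)
    · exact ⟨L, List.Perm.refl L, hsort, hs⟩
    · exfalso
      obtain ⟨X, F, G, Y, rfl, hlt⟩ := not_sorted_exists hsort
      have := mu_swap X Y F G hlt
      omega
  | succ N ih =>
    intro L hmu hs hpair
    by_cases hsort : L.Pairwise (fun a b => b.card ≤ a.card)
    · exact ⟨L, List.Perm.refl L, hsort, hs⟩
    · obtain ⟨X, F, G, Y, rfl, hlt⟩ := not_sorted_exists hsort
      have hmu2 := mu_swap X Y F G hlt
      have hperm : (X ++ F :: G :: Y).Perm (X ++ G :: F :: Y) :=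
        List.Perm.append_left X (List.Perm.swap G F Y)
      have hpair2 : ∀ a ∈ X ++ G :: F :: Y, ∀ b ∈ X ++ G :: F :: Y, a ⊆ b → a = b := by
        intro a ha b hb
        exact hpair a (hperm.mem_iff.2 ha) b (hperm.mem_iff.2 hb)
      obtain ⟨M, hp, hsrt, hsM⟩ := ih (X ++ G :: F :: Y) (by omega) (hs.swap hlt hpair) hpair2
      exact ⟨M, hperm.trans hp, hsrt, hsM⟩

lemma mem_facetSkeleton_iff {n : ℕ} (Δ : Finset (Finset (Fin n))) (G : Finset (Fin n)) :
    G ∈ facetSkeleton Δ ↔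
      (∃ F ∈ Δ, G ⊆ F ∧ G.card + 1 = F.card) ∧
      ∀ H, (∃ F ∈ Δ, H ⊆ F ∧ H.card + 1 = F.card) → G ⊆ H → G = H := by
  simp only [facetSkeleton, Finset.mem_filter, Finset.mem_biUnion, Finset.mem_powerset]

lemma skel_card {n : ℕ} {Δ : Finset (Finset (Fin n))}
    (hanti : ∀ F ∈ Δ, ∀ G ∈ Δ, F ⊆ G → F = G) {E F : Finset (Fin n)}
    (hE : E ∈ facetSkeleton Δ) (hF : F ∈ Δ) (hsub : E ⊆ F) : E.card + 1 = F.card := by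
  obtain ⟨⟨F₀, hF₀, hEF₀, hc₀⟩, hmax⟩ := (mem_facetSkeleton_iff Δ E).1 hE
  have hne : E ≠ F := by
    rintro rfl
    have h := hanti E hF F₀ hF₀ hEF₀
    rw [← h] at hc₀
    omega
  have hlt : E.card < F.card := Finset.card_lt_card (hsub.ssubset_of_ne hne)
  by_contra hcon
  have h2 : E.card + 2 ≤ F.card := by omega
  obtain ⟨H, hEH, hHF, hcH⟩ := Finset.exists_subsuperset_card_eq hsub
    (by omega : E.card ≤ F.card - 1) (by omega : F.card - 1 ≤ F.card)
  have hEH2 : E = H := hmax H ⟨F, hF, hHF, by omega⟩ hEH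
  rw [hEH2] at h2
  omega

lemma exists_skel_ext {n : ℕ} {Δ : Finset (Finset (Fin n))} :
    ∀ (m : ℕ) (H F : Finset (Fin n)), F ∈ Δ → H ⊆ F → H.card + 1 = F.card →
      n ≤ H.card + m → ∃ H' ∈ facetSkeleton Δ, H ⊆ H' := by
  intro m
  induction m with
  | zero =>
    intro H F hF hHF hc hn
    refine ⟨H, (mem_facetSkeleton_iff Δ H).2 ⟨⟨F, hF, hHF, hc⟩, ?_⟩, Finset.Subset.refl H⟩
    rintro H₂ ⟨F', hF', hH₂, hc₂⟩ hsub
    have : H₂.card ≤ n := le_trans (Finset.card_le_univ H₂) (by simp)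
    exact Finset.eq_of_subset_of_card_le hsub (by omega)
  | succ m ih =>
    intro H F hF hHF hc hn
    by_cases hmax : ∀ H₂, (∃ F' ∈ Δ, H₂ ⊆ F' ∧ H₂.card + 1 = F'.card) → H ⊆ H₂ → H = H₂
    · exact ⟨H, (mem_facetSkeleton_iff Δ H).2 ⟨⟨F, hF, hHF, hc⟩, hmax⟩, Finset.Subset.refl H⟩
    · push_neg at hmax
      obtain ⟨H₂, ⟨F', hF', hH₂F', hc₂⟩, hsub, hne⟩ := hmax
      have hlt : H.card < H₂.card := Finset.card_lt_card (hsub.ssubset_of_ne hne)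
      obtain ⟨H', hH', hsub'⟩ := ih H₂ F' hF' hH₂F' hc₂ (by omega)
      exact ⟨H', hH', hsub.trans hsub'⟩

noncomputable def blk {n : ℕ} (S : Finset (Finset (Fin n))) (prev : List (Finset (Fin n)))
    (F : Finset (Fin n)) : List (Finset (Fin n)) :=
  (F.toList.map fun x => F.erase x).filter fun G => G ∈ S ∧ ∀ P ∈ prev, ¬ G ⊆ P

noncomputable def build {n : ℕ} (S : Finset (Finset (Fin n))) :
    List (Finset (Fin n)) → List (Finset (Fin n)) → List (Finset (Fin n))
  | _, [] => []
  | prev, F :: rest => blk S prev F ++ build S (prev ++ [F]) rest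

lemma mem_blk {n : ℕ} {S : Finset (Finset (Fin n))} {prev : List (Finset (Fin n))}
    {F G : Finset (Fin n)} :
    G ∈ blk S prev F ↔ (∃ x ∈ F, G = F.erase x) ∧ G ∈ S ∧ ∀ P ∈ prev, ¬ G ⊆ P := by
  simp only [blk, List.mem_filter, List.mem_map, Finset.mem_toList, decide_eq_true_eq]
  tauto

lemma mem_build {n : ℕ} {S : Finset (Finset (Fin n))} :
    ∀ {rest prev : List (Finset (Fin n))} {G : Finset (Fin n)},
      G ∈ build S prev rest →
      (∃ F ∈ rest, G ⊆ F) ∧ G ∈ S ∧ ∀ P ∈ prev, ¬ G ⊆ P := by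
  intro rest
  induction rest with
  | nil => intro prev G h; simp [build] at h
  | cons F₀ rest' ih =>
    intro prev G h
    rcases List.mem_append.1 h with h | h
    · obtain ⟨⟨x, hx, rfl⟩, hS, hprev⟩ := mem_blk.1 h
      exact ⟨⟨F₀, by simp, Finset.erase_subset x F₀⟩, hS, hprev⟩
    · obtain ⟨⟨F, hF, hGF⟩, hS, hprev⟩ := ih h
      exact ⟨⟨F, by simp [hF], hGF⟩, hS, fun P hP => hprev P (by simp [hP])⟩

lemma mem_build_of {n : ℕ} {Δ : Finset (Finset (Fin n))}
    (hanti : ∀ F ∈ Δ, ∀ G ∈ Δ, F ⊆ G → F = G) :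
    ∀ {rest prev : List (Finset (Fin n))} {E : Finset (Fin n)},
      E ∈ facetSkeleton Δ → (∀ P ∈ prev, ¬ E ⊆ P) → (∀ F ∈ rest, F ∈ Δ) →
      (∃ F ∈ rest, E ⊆ F) → E ∈ build (facetSkeleton Δ) prev rest := by
  intro rest
  induction rest with
  | nil => rintro prev E - - - ⟨F, hF, -⟩; simp at hF
  | cons F₀ rest' ih =>
    intro prev E hE hprev hrest hex
    by_cases hEF₀ : E ⊆ F₀
    · have hF₀Δ : F₀ ∈ Δ := hrest F₀ (by simp)
      have hc : E.card + 1 = F₀.card := skel_card hanti hE hF₀Δ hEF₀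
      have hsd : (F₀ \ E).card = 1 := by
        rw [Finset.card_sdiff_of_subset hEF₀]; omega
      obtain ⟨x, hx⟩ := Finset.card_eq_one.1 hsd
      have hxF : x ∈ F₀ := by
        have : x ∈ F₀ \ E := by rw [hx]; exact Finset.mem_singleton_self x
        exact (Finset.mem_sdiff.1 this).1
      have hEeq : E = F₀.erase x := by
        ext a
        simp only [Finset.mem_erase]
        constructor
        · intro ha
          refine ⟨?_, hEF₀ ha⟩
          rintro rfl
          have : a ∈ F₀ \ E := by rw [hx]; exact Finset.mem_singleton_self a
          exact (Finset.mem_sdiff.1 this).2 ha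
        · rintro ⟨hax, haF⟩
          by_contra haE
          have : a ∈ F₀ \ E := Finset.mem_sdiff.2 ⟨haF, haE⟩
          rw [hx] at this
          exact hax (Finset.mem_singleton.1 this)
      refine List.mem_append.2 (Or.inl (mem_blk.2 ⟨⟨x, hxF, hEeq⟩, hE, hprev⟩))
    · refine List.mem_append.2 (Or.inr (ih hE ?_ (fun F hF => hrest F (by simp [hF])) ?_))
      · intro P hP
        rcases List.mem_append.1 hP with h | h
        · exact hprev P h
        · simp only [List.mem_singleton] at h; subst h; exact hEF₀
      · obtain ⟨F, hF, hEF⟩ := hex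
        rcases List.mem_cons.1 hF with rfl | hF'
        · exact absurd hEF hEF₀
        · exact ⟨F, hF', hEF⟩

lemma blk_nodup {n : ℕ} {S : Finset (Finset (Fin n))} {prev : List (Finset (Fin n))}
    {F : Finset (Fin n)} : (blk S prev F).Nodup := by
  apply List.Nodup.filter
  apply List.Nodup.map_on _ F.nodup_toList
  intro x hx y hy hxy
  rw [Finset.mem_toList] at hx hy
  by_contra hne
  have : y ∈ F.erase x := Finset.mem_erase.2 ⟨fun h => hne h.symm, hy⟩
  rw [hxy] at this
  exact (Finset.mem_erase.1 this).1 rfl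

lemma build_nodup {n : ℕ} {S : Finset (Finset (Fin n))} :
    ∀ {rest prev : List (Finset (Fin n))}, (build S prev rest).Nodup := by
  intro rest
  induction rest with
  | nil => intro prev; simp [build]
  | cons F₀ rest' ih =>
    intro prev
    refine List.Nodup.append blk_nodup ih ?_
    intro G hG1 hG2
    obtain ⟨⟨x, hx, rfl⟩, -, -⟩ := mem_blk.1 hG1
    obtain ⟨-, -, hprev⟩ := mem_build hG2
    exact hprev F₀ (by simp) (Finset.erase_subset x F₀)

lemma build_decomp {n : ℕ} {S : Finset (Finset (Fin n))} :
    ∀ (rest prev P : List (Finset (Fin n))) (G : Finset (Fin n))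
      (Q : List (Finset (Fin n))), build S prev rest = P ++ G :: Q →
      ∃ A F B P₁ P₂, rest = A ++ F :: B ∧ blk S (prev ++ A) F = P₁ ++ G :: P₂ ∧
        P = build S prev A ++ P₁ := by
  intro rest
  induction rest with
  | nil => intro prev P G Q h; simp [build] at h
  | cons F₀ rest' ih =>
    intro prev P G Q h
    rw [show build S prev (F₀ :: rest') = blk S prev F₀ ++ build S (prev ++ [F₀]) rest'
      from rfl] at h
    rcases List.append_eq_append_iff.1 h with ⟨a', h1, h2⟩ | ⟨c', h1, h2⟩
    · -- P = blk ++ a', build' = a' ++ G :: Q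
      obtain ⟨A', F, B', P₁, P₂, hr, hb, hp⟩ := ih (prev ++ [F₀]) a' G Q h2
      refine ⟨F₀ :: A', F, B', P₁, P₂, by rw [hr]; rfl, ?_, ?_⟩
      · rw [← hb]; congr 1; simp
      · rw [h1, hp]; simp [build]
    · cases c' with
      | nil =>
        simp only [List.nil_append] at h2
        simp only [List.append_nil] at h1
        obtain ⟨A', F, B', P₁, P₂, hr, hb, hp⟩ := ih (prev ++ [F₀]) [] G Q (by simp [← h2])
        have hnil : build S (prev ++ [F₀]) A' = [] ∧ P₁ = [] := by
          have := hp.symm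
          exact List.append_eq_nil_iff.1 this
        refine ⟨F₀ :: A', F, B', P₁, P₂, by rw [hr]; rfl, ?_, ?_⟩
        · rw [← hb]; congr 1; simp
        · rw [← h1, hnil.2]; simp [build, hnil.1]
      | cons G' c'' =>
        injection h2 with h3 h4
        subst h3
        refine ⟨[], F₀, rest', P, c'', by simp, ?_, by simp [build]⟩
        rw [List.append_nil, h1]

lemma exists_eq_erase {n : ℕ} {H F : Finset (Fin n)} (hsub : H ⊆ F)
    (hc : H.card + 1 = F.card) : ∃ y ∈ F, y ∉ H ∧ H = F.erase y := by
  have hsd : (F \ H).card = 1 := by rw [Finset.card_sdiff_of_subset hsub]; omega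
  obtain ⟨y, hy⟩ := Finset.card_eq_one.1 hsd
  have hyF : y ∈ F ∧ y ∉ H := by
    have : y ∈ F \ H := by rw [hy]; exact Finset.mem_singleton_self y
    exact ⟨(Finset.mem_sdiff.1 this).1, (Finset.mem_sdiff.1 this).2⟩
  refine ⟨y, hyF.1, hyF.2, ?_⟩
  ext a
  simp only [Finset.mem_erase]
  constructor
  · intro ha
    refine ⟨?_, hsub ha⟩
    rintro rfl
    exact hyF.2 ha
  · rintro ⟨hay, haF⟩
    by_contra haH
    have : a ∈ F \ H := Finset.mem_sdiff.2 ⟨haF, haH⟩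
    rw [hy] at this
    exact hay (Finset.mem_singleton.1 this)

lemma erase_inter_erase {n : ℕ} (F : Finset (Fin n)) (x y : Fin n) :
    (F.erase y) ∩ (F.erase x) = (F.erase x).erase y := by
  ext a
  simp only [Finset.mem_inter, Finset.mem_erase]
  tauto

lemma erase_union_erase {n : ℕ} {F : Finset (Fin n)} {x y : Fin n} (hx : x ∈ F)
    (hy : y ∈ F) (hxy : x ≠ y) : F.erase x ∪ F.erase y = F := by
  ext a
  simp only [Finset.mem_union, Finset.mem_erase]
  constructor
  · rintro (⟨-, h⟩ | ⟨-, h⟩) <;> exact h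
  · intro ha
    by_cases hax : a = x
    · subst hax; exact Or.inr ⟨hxy, ha⟩
    · exact Or.inl ⟨hax, ha⟩

lemma build_SAux {n : ℕ} {Δ : Finset (Finset (Fin n))}
    (hanti : ∀ F ∈ Δ, ∀ G ∈ Δ, F ⊆ G → F = G)
    {L : List (Finset (Fin n))} (hLΔ : ∀ F, F ∈ L ↔ F ∈ Δ)
    (hs : SAux L) (hsort : L.Pairwise (fun a b => b.card ≤ a.card)) :
    SAux (build (facetSkeleton Δ) [] L) := by
  set S := facetSkeleton Δ with hSdef
  intro P G Q hdec E hE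
  obtain ⟨A, F, B, P₁, P₂, hrest, hblk, hP⟩ := build_decomp L [] P G Q hdec
  rw [List.nil_append] at hblk
  have hGblk : G ∈ blk S A F := by rw [hblk]; simp
  obtain ⟨⟨x, hxF, hGx⟩, hGS, hGprev⟩ := mem_blk.1 hGblk
  have hFL : F ∈ L := by rw [hrest]; simp
  have hFΔ : F ∈ Δ := (hLΔ F).1 hFL
  have hGF : G ⊆ F := by rw [hGx]; exact Finset.erase_subset x F
  have hcG : G.card + 1 = F.card := by
    rw [hGx]; exact Finset.card_erase_add_one hxF
  have hAL : ∀ F' ∈ A, F' ∈ L := by intro F' h; rw [hrest]; simp [h]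
  rw [hP] at hE
  rcases List.mem_append.1 hE with hE1 | hE1
  · -- E in earlier blocks
    obtain ⟨⟨Fm, hFmA, hEFm⟩, hES, -⟩ := mem_build hE1
    obtain ⟨J₀, hJ₀A, hc₀, hs₀⟩ := hs A F B hrest Fm hFmA
    set H := J₀ ∩ F with hHdef
    have hHF : H ⊆ F := Finset.inter_subset_right
    obtain ⟨y, hyF, hyH, hHy⟩ := exists_eq_erase hHF hc₀
    have hHG : H ≠ G := by
      intro hh
      exact hGprev J₀ hJ₀A (by rw [← hh]; exact Finset.inter_subset_left)
    have hxy : x ≠ y := by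
      intro hh
      exact hHG (by rw [hHy, hGx, hh])
    obtain ⟨H', hH'S, hHH'⟩ := exists_skel_ext (Δ := Δ) n H F hFΔ hHF hc₀ (by omega)
    have hGH' : ¬ G ⊆ H' := by
      intro hh
      have hFH' : F ⊆ H' := by
        rw [← erase_union_erase hxF hyF hxy, ← hGx, ← hHy]
        exact Finset.union_subset hh hHH'
      obtain ⟨⟨F'', hF''Δ, hH'F'', hc''⟩, -⟩ := (mem_facetSkeleton_iff Δ H').1 hH'S
      have hFF'' : F = F'' := hanti F hFΔ F'' hF''Δ (hFH'.trans hH'F'')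
      have hH'eqF : H' = F := Finset.Subset.antisymm (by rw [hFF'']; exact hH'F'') hFH'
      rw [hH'eqF, ← hFF''] at hc''
      omega
    have hHiG : H ∩ G = (F.erase x).erase y := by rw [hHy, hGx, erase_inter_erase]
    have hyFx : y ∈ F.erase x := Finset.mem_erase.2 ⟨fun hh => hxy hh.symm, hyF⟩
    have hcHiG : (H ∩ G).card + 1 = G.card := by
      rw [hHiG, hGx]; exact Finset.card_erase_add_one hyFx
    have hsubHiG : H ∩ G ⊆ H' ∩ G := Finset.inter_subset_inter hHH' (Finset.Subset.refl G)
    have hH'G : (H' ∩ G).card + 1 = G.card := by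
      have h1 : (H ∩ G).card ≤ (H' ∩ G).card := Finset.card_le_card hsubHiG
      have h2 : (H' ∩ G).card < G.card := by
        rcases (Finset.card_le_card (Finset.inter_subset_right (s₁ := H'))).lt_or_eq with h | h
        · exact h
        · exact absurd (by rw [← Finset.eq_of_subset_of_card_le
            (Finset.inter_subset_right (s₁ := H')) h.ge]; exact Finset.inter_subset_left) hGH'
      omega
    have hH'P : H' ∈ build S [] A := by
      rw [hSdef]
      apply mem_build_of hanti hH'S (by simp) (fun F' hF' => (hLΔ F').1 (hAL F' hF'))
      by_cases hH'H : H' = H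
      · exact ⟨J₀, hJ₀A, by rw [hH'H]; exact Finset.inter_subset_left⟩
      · obtain ⟨⟨F'', hF''Δ, hH'F'', hc''⟩, -⟩ := (mem_facetSkeleton_iff Δ H').1 hH'S
        have hlt : H.card < H'.card := Finset.card_lt_card (hHH'.ssubset_of_ne (fun hh => hH'H hh.symm))
        have hcF'' : F.card < F''.card := by omega
        have hF''L : F'' ∈ L := (hLΔ F'').2 hF''Δ
        rw [hrest] at hF''L
        rcases List.mem_append.1 hF''L with h | h
        · exact ⟨F'', h, hH'F''⟩
        · exfalso
          rcases List.mem_cons.1 h with rfl | h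
          · omega
          · have hpw := (List.pairwise_append.1 (hrest ▸ hsort)).2.1
            have := (List.pairwise_cons.1 hpw).1 F'' h
            omega
    refine ⟨H', by rw [hP]; exact List.mem_append.2 (Or.inl hH'P), hH'G, ?_⟩
    have h1 : E ∩ G ⊆ Fm ∩ F := Finset.inter_subset_inter hEFm hGF
    have h2 : E ∩ G ⊆ H :=
      Finset.subset_inter (h1.trans hs₀) (h1.trans Finset.inter_subset_right)
    exact h2.trans hHH'
  · -- E in the same block, earlier
    have hEblk : E ∈ blk S A F := by rw [hblk]; exact List.mem_append.2 (Or.inl hE1)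
    obtain ⟨⟨y, hyF, hEy⟩, hES, -⟩ := mem_blk.1 hEblk
    have hEG : E ≠ G := by
      intro hh
      have hnd : (P₁ ++ G :: P₂).Nodup := hblk ▸ blk_nodup
      exact (List.disjoint_of_nodup_append hnd) (hh ▸ hE1) (by simp)
    have hxy : x ≠ y := fun hh => hEG (by rw [hEy, hGx, hh])
    have hyFx : y ∈ F.erase x := Finset.mem_erase.2 ⟨fun hh => hxy hh.symm, hyF⟩
    refine ⟨E, by rw [hP]; exact List.mem_append.2 (Or.inr hE1), ?_, Finset.inter_subset_left⟩
    rw [hEy, hGx, erase_inter_erase]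
    rw [hGx] at *
    exact Finset.card_erase_add_one hyFx

lemma skel_anti {n : ℕ} (Δ : Finset (Finset (Fin n))) :
    ∀ F ∈ facetSkeleton Δ, ∀ G ∈ facetSkeleton Δ, F ⊆ G → F = G := by
  intro F hF G hG hsub
  obtain ⟨-, hmax⟩ := (mem_facetSkeleton_iff Δ F).1 hF
  obtain ⟨hG1, -⟩ := (mem_facetSkeleton_iff Δ G).1 hG
  exact hmax G hG1 hsub

lemma step_shellable {n : ℕ} {Δ : Finset (Finset (Fin n))}
    (hanti : ∀ F ∈ Δ, ∀ G ∈ Δ, F ⊆ G → F = G) (h : Shellable Δ) :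
    Shellable (facetSkeleton Δ) := by
  obtain ⟨L, hnd, hLt, hsh⟩ := h
  have hLΔ : ∀ F, F ∈ L ↔ F ∈ Δ := by
    intro F; rw [← hLt, List.mem_toFinset]
  have hpair : ∀ a ∈ L, ∀ b ∈ L, a ⊆ b → a = b := fun a ha b hb =>
    hanti a ((hLΔ a).1 ha) b ((hLΔ b).1 hb)
  have hSAux := isShelling_SAux hsh hnd hpair
  obtain ⟨M, hperm, hsort, hsM⟩ := sort_exists (mu L) L le_rfl hSAux hpair
  have hMΔ : ∀ F, F ∈ M ↔ F ∈ Δ := fun F => hperm.mem_iff.symm.trans (hLΔ F)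
  refine ⟨build (facetSkeleton Δ) [] M, build_nodup, ?_, ?_⟩
  · ext G
    rw [List.mem_toFinset]
    constructor
    · intro hG
      exact (mem_build hG).2.1
    · intro hG
      obtain ⟨⟨F, hFΔ, hGF, -⟩, -⟩ := (mem_facetSkeleton_iff Δ G).1 hG
      exact mem_build_of hanti hG (by simp) (fun F' hF' => (hMΔ F').1 hF')
        ⟨F, (hMΔ F).2 hFΔ, hGF⟩
  · exact (build_SAux hanti hMΔ hsM hsort).isShelling

lemma main_aux {n : ℕ} (Δ : Finset (Finset (Fin n))) (d : ℕ)
    (hanti : ∀ F ∈ Δ, ∀ G ∈ Δ, F ⊆ G → F = G)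
    (hdim : ∀ F ∈ Δ, F.card ≤ d + 1) (hdim' : ∃ F ∈ Δ, F.card = d + 1)
    (h : Shellable Δ) :
    ∀ i ≤ d,
      (∀ F ∈ facetSkeleton^[i] Δ, ∀ G ∈ facetSkeleton^[i] Δ, F ⊆ G → F = G) ∧
      (∀ F ∈ facetSkeleton^[i] Δ, F.card ≤ d - i + 1) ∧
      (∃ F ∈ facetSkeleton^[i] Δ, F.card = d - i + 1) ∧
      Shellable (facetSkeleton^[i] Δ) := by
  intro i
  induction i with
  | zero =>
    intro _
    simpa using ⟨hanti, hdim, hdim', h⟩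
  | succ i ih =>
    intro hi
    obtain ⟨h1, h2, h3, h4⟩ := ih (by omega)
    set Δ' := facetSkeleton^[i] Δ with hΔ'
    have hiter : facetSkeleton^[i+1] Δ = facetSkeleton Δ' := by
      rw [Function.iterate_succ_apply']
    rw [hiter]
    refine ⟨skel_anti Δ', ?_, ?_, step_shellable h1 h4⟩
    · intro F hF
      obtain ⟨⟨F', hF'Δ, hFF', hc⟩, -⟩ := (mem_facetSkeleton_iff Δ' F).1 hF
      have := h2 F' hF'Δ
      omega
    · obtain ⟨F₀, hF₀, hcF₀⟩ := h3
      have hge : d - i ≥ 1 := by omega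
      obtain ⟨G, hGF₀, hGc⟩ := Finset.exists_subset_card_eq (s := F₀) (n := d - i) (by omega)
      refine ⟨G, (mem_facetSkeleton_iff Δ' G).2 ⟨⟨F₀, hF₀, hGF₀, by omega⟩, ?_⟩, by omega⟩
      rintro H ⟨F', hF'Δ, hHF', hc'⟩ hGH
      have := h2 F' hF'Δ
      exact Finset.eq_of_subset_of_card_le hGH (by omega)

/-- If `Γ` is a shellable simplicial complex of dimension `d` (given by its facet
set, an antichain), then the `i`-th facet skeleton `Γ^[i]` is shellable for all
`i ≤ d`. -/
theorem facetSkeleton_shellable {n : ℕ} (Δ : Finset (Finset (Fin n))) (d : ℕ)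
    (hanti : ∀ F ∈ Δ, ∀ G ∈ Δ, F ⊆ G → F = G)
    (hdim : ∀ F ∈ Δ, F.card ≤ d + 1) (hdim' : ∃ F ∈ Δ, F.card = d + 1)
    (h : Shellable Δ) :
    ∀ i ≤ d, Shellable (facetSkeleton^[i] Δ) := by
  exact fun i hi => (main_aux Δ d hanti hdim hdim' h i hi).2.2.2
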